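/- With the setup of the indefinite Sz.-Nagy dilation (V a module over a ring of characteristic 2, T : V → V self-adjoint, W = ⊕_{n∈ℤ}V, U the dilation operator with (Ux)₋₁ = (1+T)x₀ + Tx₁, (Ux)₀ = Tx₀ + (1+T)x₁, (Ux)ₙ = xₙ₊₁ otherwise), for every natural number n ≥ 1 and every v ∈ V one has P(Uⁿ(ι(v))) = Tⁿv, where ι : V → W embeds v in coordinate 0 (zero elsewhere) and P : W → V extracts coordinate 0. (Sz.-Nagy power dilation equation.) -/

import Mathlib

theorem sznagy_power_dilation
    (R : Type*) [Ring R] [CharP R 2]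
    (V : Type*) [AddCommGroup V] [Module R V]
    (T : V →ₗ[R] V)
    (U : (ℤ →₀ V) →ₗ[R] (ℤ →₀ V))
    (hU₁ : ∀ x : ℤ →₀ V, (U x) (-1) = (x 0 + T (x 0)) + T (x 1))
    (hU₂ : ∀ x : ℤ →₀ V, (U x) 0 = T (x 0) + (x 1 + T (x 1)))
    (hU₃ : ∀ (x : ℤ →₀ V) (n : ℤ), n ≠ -1 → n ≠ 0 → (U x) n = x (n + 1)) :
    ∀ n : ℕ, 1 ≤ n → ∀ v : V, ((U ^ n) (Finsupp.single 0 v)) 0 = (T ^ n) v := by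
  intro n hn v
  set x : ℤ →₀ V := Finsupp.single 0 v with hx
  have key : ∀ m : ℕ, 1 ≤ m →
      ((U ^ m) x) 0 = (T ^ m) v ∧ ∀ k : ℤ, 1 ≤ k → ((U ^ m) x) k = 0 := by
    intro m hm
    induction m, hm using Nat.le_induction with
    | base =>
      constructor
      · have := hU₂ x
        simp only [hx, Finsupp.single_eq_same,
          Finsupp.single_eq_of_ne' (show (0:ℤ) ≠ 1 by decide)] at this
        simpa [pow_succ', Module.End.mul_apply] using this
      · intro k hk
        have h1 : k ≠ -1 := by omega
        have h2 : k ≠ 0 := by omega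
        have := hU₃ x k h1 h2
        have h3 : k + 1 ≠ 0 := by omega
        simp only [hx, Finsupp.single_eq_of_ne' (Ne.symm h3)] at this
        simpa [pow_succ', Module.End.mul_apply] using this
    | succ m hm ih =>
      have happ : (U ^ (m + 1)) x = U ((U ^ m) x) := by
        rw [pow_succ']
        rfl
      obtain ⟨ih0, ihp⟩ := ih
      constructor
      · rw [happ]
        have := hU₂ ((U ^ m) x)
        rw [ih0, ihp 1 le_rfl] at this
        simpa [pow_succ', Module.End.mul_apply] using this
      · intro k hk
        rw [happ]
        have h1 : k ≠ -1 := by omega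
        have h2 : k ≠ 0 := by omega
        rw [hU₃ ((U ^ m) x) k h1 h2]
        exact ihp (k + 1) (by omega)
  exact (key n hn).1
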